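/- Let P ⊂ ℂ² be a real 2-dimensional linear subspace with orthonormal basis (t₁, t₂) and holomorphic angle θ (so that J t₁ = cos(θ) t₂ + sin(θ) n with n a unit vector in P^⊥). Then for every vector t ∈ P, the norm of the orthogonal projection of J t onto P^⊥ equals sin(θ)·‖t‖. In particular, the map t ↦ proj_{P^⊥}(J t) from P to P^⊥ is a similarity with factor sin θ. -/

import Mathlib

open scoped RealInnerProductSpace

/-- ℂ² viewed as a real 4-dimensional Euclidean (inner product) space. -/
noncomputable abbrev C2 : Type := WithLp 2 (ℂ × ℂ)

/-- Multiplication by `i` on ℂ². -/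
noncomputable def Jc (v : C2) : C2 := Complex.I • v

lemma Jc_fst (v : C2) : (WithLp.ofLp (Jc v)).1 = Complex.I * (WithLp.ofLp v).1 := rfl
lemma Jc_snd (v : C2) : (WithLp.ofLp (Jc v)).2 = Complex.I * (WithLp.ofLp v).2 := rfl

lemma cinner (z w : ℂ) : ⟪z, w⟫ = ((starRingEnd ℂ) z * w).re := by rw [Complex.inner, mul_comm]

lemma inner_Jc_Jc (v w : C2) : ⟪Jc v, Jc w⟫ = ⟪v, w⟫ := by
  rw [WithLp.prod_inner_apply, WithLp.prod_inner_apply, Jc_fst, Jc_snd, Jc_fst, Jc_snd]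
  simp only [cinner, map_mul, Complex.conj_I]
  ring_nf
  simp [Complex.ext_iff]

lemma inner_Jc_left (v w : C2) : ⟪Jc v, w⟫ = -⟪v, Jc w⟫ := by
  rw [WithLp.prod_inner_apply, WithLp.prod_inner_apply, Jc_fst, Jc_snd, Jc_fst, Jc_snd]
  simp only [cinner, map_mul, Complex.conj_I]
  ring_nf
  simp [Complex.ext_iff]
  ring

lemma Jc_add (v w : C2) : Jc (v + w) = Jc v + Jc w := smul_add _ _ _
lemma Jc_smul (a : ℝ) (v : C2) : Jc (a • v) = a • Jc v := smul_comm _ _ _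

theorem stmt_1 (P : Submodule ℝ C2) (t₁ t₂ n : C2) (θ : ℝ)
    (hθ : θ ∈ Set.Icc 0 Real.pi)
    (hspan : P = Submodule.span ℝ {t₁, t₂})
    (hn₁ : ‖t₁‖ = 1) (hn₂ : ‖t₂‖ = 1) (ho : ⟪t₁, t₂⟫ = 0)
    (hn : n ∈ Pᗮ) (hnn : ‖n‖ = 1)
    (hJ : Jc t₁ = Real.cos θ • t₂ + Real.sin θ • n) :
    ∀ t ∈ P, ‖(Submodule.orthogonalProjectionOnto Pᗮ (Jc t) : C2)‖ = Real.sin θ * ‖t‖ := by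
  intro t ht
  set s := Real.sin θ with hs
  set c := Real.cos θ with hc
  -- basic memberships
  have ht₁P : t₁ ∈ P := by
    rw [hspan]; exact Submodule.subset_span (by simp)
  have ht₂P : t₂ ∈ P := by
    rw [hspan]; exact Submodule.subset_span (by simp)
  -- basic inner products
  have h11 : ⟪t₁, t₁⟫ = 1 := by rw [real_inner_self_eq_norm_sq, hn₁]; norm_num
  have h22 : ⟪t₂, t₂⟫ = 1 := by rw [real_inner_self_eq_norm_sq, hn₂]; norm_num
  have hnn' : ⟪n, n⟫ = 1 := by rw [real_inner_self_eq_norm_sq, hnn]; norm_num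
  have ht1n : ⟪t₁, n⟫ = 0 := (Submodule.mem_orthogonal P n).mp hn t₁ ht₁P
  have ht2n : ⟪t₂, n⟫ = 0 := (Submodule.mem_orthogonal P n).mp hn t₂ ht₂P
  have ho' : ⟪t₂, t₁⟫ = 0 := by rw [real_inner_comm]; exact ho
  have hnt1 : ⟪n, t₁⟫ = 0 := by rw [real_inner_comm]; exact ht1n
  have hnt2 : ⟪n, t₂⟫ = 0 := by rw [real_inner_comm]; exact ht2n
  -- J-related inner products
  have hJ21 : ⟪Jc t₂, t₁⟫ = -c := by
    rw [inner_Jc_left, hJ, inner_add_right, real_inner_smul_right, real_inner_smul_right,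
      h22, ht2n]
    ring
  have hJ22 : ⟪Jc t₂, t₂⟫ = 0 := by
    have h1 := inner_Jc_left t₂ t₂
    have h2 := real_inner_comm (Jc t₂) t₂
    linarith
  have hJJ22 : ⟪Jc t₂, Jc t₂⟫ = 1 := by rw [inner_Jc_Jc]; exact h22
  have hsn' : s • n = Jc t₁ - c • t₂ := by rw [hJ]; module
  have hnJ2 : s * ⟪n, Jc t₂⟫ = 0 := by
    have h1 : ⟪s • n, Jc t₂⟫ = ⟪Jc t₁ - c • t₂, Jc t₂⟫ := by rw [hsn']
    rw [real_inner_smul_left, inner_sub_left, inner_Jc_Jc, real_inner_smul_left,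
      show ⟪t₂, Jc t₂⟫ = ⟪Jc t₂, t₂⟫ from real_inner_comm _ _, hJ22, ho] at h1
    linarith
  -- the second normal component
  set q₂ : C2 := Jc t₂ + c • t₁ with hq₂
  have ht1q2 : ⟪t₁, q₂⟫ = 0 := by
    rw [hq₂, inner_add_right, real_inner_smul_right, h11, show ⟪t₁, Jc t₂⟫ = ⟪Jc t₂, t₁⟫ from real_inner_comm _ _, hJ21]
    ring
  have ht2q2 : ⟪t₂, q₂⟫ = 0 := by
    rw [hq₂, inner_add_right, real_inner_smul_right, ho', show ⟪t₂, Jc t₂⟫ = ⟪Jc t₂, t₂⟫ from real_inner_comm _ _, hJ22]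
    ring
  have hq₂P : q₂ ∈ Pᗮ := by
    rw [Submodule.mem_orthogonal]
    intro u hu
    rw [hspan, Submodule.mem_span_pair] at hu
    obtain ⟨x, y, rfl⟩ := hu
    rw [inner_add_left, real_inner_smul_left, real_inner_smul_left, ht1q2, ht2q2]; ring
  have hq2q2 : ⟪q₂, q₂⟫ = s ^ 2 := by
    rw [hq₂, inner_add_left, inner_add_right, inner_add_right, real_inner_smul_left,
      real_inner_smul_left, real_inner_smul_right, real_inner_smul_right,
      show ⟪t₁, Jc t₂⟫ = ⟪Jc t₂, t₁⟫ from real_inner_comm _ _, hJ21, hJJ22, h11]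
    have := Real.sin_sq_add_cos_sq θ
    rw [← hs, ← hc] at this
    nlinarith
  have hnq2 : s * ⟪n, q₂⟫ = 0 := by
    rw [hq₂, inner_add_right, real_inner_smul_right, hnt1, mul_add]
    rw [hnJ2]; ring
  -- decompose t
  rw [hspan, Submodule.mem_span_pair] at ht
  obtain ⟨a, b, rfl⟩ := ht
  set q : C2 := (a * s) • n + b • q₂ with hq
  have hqP : q ∈ Pᗮ := Submodule.add_mem _ (Submodule.smul_mem _ _ hn)
    (Submodule.smul_mem _ _ hq₂P)
  have hpP : (a * c) • t₂ - (b * c) • t₁ ∈ Pᗮᗮ :=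
    Submodule.le_orthogonal_orthogonal P
      (Submodule.sub_mem _ (Submodule.smul_mem _ _ ht₂P) (Submodule.smul_mem _ _ ht₁P))
  have hdecomp : Jc (a • t₁ + b • t₂) = q + ((a * c) • t₂ - (b * c) • t₁) := by
    rw [Jc_add, Jc_smul, Jc_smul, hq, hq₂, hJ]
    module
  have hproj : (Submodule.orthogonalProjectionOnto Pᗮ (Jc (a • t₁ + b • t₂)) : C2) = q :=
    Submodule.eq_starProjection_of_mem_orthogonal' hqP hpP hdecomp
  rw [hproj]
  -- compute norms
  have hqsq : ‖q‖ ^ 2 = s ^ 2 * (a ^ 2 + b ^ 2) := by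
    rw [← real_inner_self_eq_norm_sq, hq]
    rw [inner_add_left, inner_add_right, inner_add_right, real_inner_smul_left,
      real_inner_smul_left, real_inner_smul_left, real_inner_smul_left,
      real_inner_smul_right, real_inner_smul_right, real_inner_smul_right,
      real_inner_smul_right, hnn', hq2q2]
    have hnq2' : s * ⟪q₂, n⟫ = 0 := by
      rw [show ⟪q₂, n⟫ = ⟪n, q₂⟫ from real_inner_comm _ _]; exact hnq2
    linear_combination (a * b) * hnq2' + (a * b) * hnq2
  have htsq : ‖a • t₁ + b • t₂‖ ^ 2 = a ^ 2 + b ^ 2 := by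
    rw [← real_inner_self_eq_norm_sq, inner_add_left, inner_add_right, inner_add_right,
      real_inner_smul_left, real_inner_smul_left, real_inner_smul_left, real_inner_smul_left,
      real_inner_smul_right, real_inner_smul_right, real_inner_smul_right,
      real_inner_smul_right, h11, h22, ho, ho']
    ring
  have hsnn : 0 ≤ s := Real.sin_nonneg_of_nonneg_of_le_pi hθ.1 hθ.2
  have h1 : ‖q‖ ^ 2 = (s * ‖a • t₁ + b • t₂‖) ^ 2 := by
    rw [hqsq, mul_pow, htsq]
  have h2 : 0 ≤ s * ‖a • t₁ + b • t₂‖ := mul_nonneg hsnn (norm_nonneg _)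
  rw [← Real.sqrt_sq (norm_nonneg q), h1, Real.sqrt_sq h2]
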